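/- For integers r ≥ 1 and n ≥ 0, (1/(r-1)!) · Σ_{k=1}^{r} c(r,k) · B_n^{(-k)} = r·(r+1)^n, where c(r,k) is the unsigned Stirling number of the first kind and B_n^{(-k)} = Σ_{l=1}^{k} (-1)^{l+k} l! S(k,l) (l+1)^n. -/

import Mathlib

open Finset

/-- Stirling numbers of the second kind. -/
def S2 : ℕ → ℕ → ℕ
  | 0, 0 => 1
  | 0, _ + 1 => 0
  | _ + 1, 0 => 0
  | n + 1, k + 1 => S2 n k + (k + 1) * S2 n (k + 1)

/-- Unsigned Stirling numbers of the first kind. -/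
def S1 : ℕ → ℕ → ℕ
  | 0, 0 => 1
  | 0, _ + 1 => 0
  | _ + 1, 0 => 0
  | n + 1, k + 1 => S1 n k + n * S1 n (k + 1)

lemma S2_zero_of_lt : ∀ k l, k < l → S2 k l = 0 := by
  intro k
  induction k with
  | zero => intro l h; cases l with
    | zero => omega
    | succ m => rfl
  | succ k ih =>
    intro l h
    cases l with
    | zero => omega
    | succ m =>
      show S2 k m + (m + 1) * S2 k (m + 1) = 0
      rw [ih m (by omega), ih (m+1) (by omega)]; ring

lemma S1_zero_of_lt : ∀ r k, r < k → S1 r k = 0 := by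
  intro r
  induction r with
  | zero => intro k h; cases k with
    | zero => omega
    | succ m => rfl
  | succ r ih =>
    intro k h
    cases k with
    | zero => omega
    | succ m =>
      show S1 r m + r * S1 r (m + 1) = 0
      rw [ih m (by omega), ih (m+1) (by omega)]; ring

lemma orth (r : ℕ) : ∀ l, (∑ k ∈ Finset.range (r+1),
    (-1 : ℤ) ^ k * S1 r k * S2 k l) = (-1) ^ r * (if l = r then 1 else 0) := by
  induction r with
  | zero =>
    intro l
    rw [show (0:ℕ)+1 = 1 from rfl, Finset.range_one, Finset.sum_singleton]
    cases l with
    | zero => norm_num [show S1 0 0 = 1 from rfl, show S2 0 0 = 1 from rfl]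
    | succ m => norm_num [show S2 0 (m+1) = 0 from rfl]
  | succ r ih =>
    intro l
    rw [Finset.sum_range_succ' (fun k => (-1 : ℤ) ^ k * S1 (r+1) k * S2 k l)]
    have hS1z : S1 (r+1) 0 = 0 := rfl
    rw [hS1z]
    simp only [Nat.cast_zero, mul_zero, zero_mul, add_zero, pow_zero, one_mul]
    have expand : ∀ k, (S1 (r+1) (k+1) : ℤ) = S1 r k + r * S1 r (k+1) := by
      intro k; show ((S1 r k + r * S1 r (k+1) : ℕ) : ℤ) = _; push_cast; ring
    have hB : (∑ k ∈ Finset.range (r+1),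
        (-1 : ℤ) ^ (k+1) * ((r : ℤ) * S1 r (k+1)) * S2 (k+1) l)
        = (r : ℤ) * ((-1) ^ r * (if l = r then 1 else 0)) := by
      have h2 : (∑ k ∈ Finset.range (r+2),
          (-1 : ℤ) ^ k * ((r : ℤ) * S1 r k) * S2 k l)
          = (r : ℤ) * ((-1) ^ r * (if l = r then 1 else 0)) := by
        rw [Finset.sum_range_succ]
        rw [S1_zero_of_lt r (r+1) (by omega)]
        have : (∑ k ∈ Finset.range (r+1), (-1 : ℤ) ^ k * ((r:ℤ) * S1 r k) * S2 k l)
            = (r:ℤ) * ∑ k ∈ Finset.range (r+1), (-1 : ℤ) ^ k * S1 r k * S2 k l := by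
          rw [Finset.mul_sum]; apply Finset.sum_congr rfl; intro k _; ring
        rw [this, ih l]; push_cast; ring
      rw [Finset.sum_range_succ' (fun k => (-1 : ℤ) ^ k * ((r : ℤ) * S1 r k) * S2 k l)] at h2
      have hz : (r : ℤ) * (S1 r 0 : ℤ) = 0 := by
        cases r with
        | zero => simp
        | succ m => rw [show S1 (m+1) 0 = 0 from rfl]; simp
      simp only [pow_zero, one_mul] at h2
      rw [show ((r:ℤ) * (S1 r 0:ℤ)) * (S2 0 l : ℤ) = 0 by rw [hz]; ring] at h2
      rw [add_zero] at h2
      exact h2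
    have split : (∑ k ∈ Finset.range (r+1), (-1:ℤ)^(k+1) * S1 (r+1) (k+1) * S2 (k+1) l)
        = (∑ k ∈ Finset.range (r+1), (-1:ℤ)^(k+1) * S1 r k * S2 (k+1) l)
          + (∑ k ∈ Finset.range (r+1), (-1:ℤ)^(k+1) * ((r:ℤ) * S1 r (k+1)) * S2 (k+1) l) := by
      rw [← Finset.sum_add_distrib]
      apply Finset.sum_congr rfl
      intro k _
      rw [expand k]; ring
    rw [split, hB]
    cases l with
    | zero =>
      have h0 : ∀ k, S2 (k+1) 0 = 0 := fun k => rfl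
      simp only [h0, Nat.cast_zero, mul_zero, zero_mul, Finset.sum_const_zero, zero_add]
      rw [if_neg (show ¬(0 = r+1) by omega)]
      split_ifs with h
      · rw [← h]; norm_num
      · ring
    | succ m =>
      have hS2 : ∀ k, (S2 (k+1) (m+1) : ℤ) = S2 k m + (m+1) * S2 k (m+1) := by
        intro k; show ((S2 k m + (m+1) * S2 k (m+1) : ℕ) : ℤ) = _; push_cast; ring
      have splitA : (∑ k ∈ Finset.range (r+1), (-1:ℤ)^(k+1) * S1 r k * S2 (k+1) (m+1))
          = (∑ k ∈ Finset.range (r+1),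
              (-((-1:ℤ)^k * S1 r k * S2 k m) - (m+1) * ((-1:ℤ)^k * S1 r k * S2 k (m+1)))) := by
        apply Finset.sum_congr rfl
        intro k _
        rw [hS2 k]; ring
      rw [splitA, Finset.sum_sub_distrib, Finset.sum_neg_distrib, ← Finset.mul_sum, ih m, ih (m+1)]
      by_cases h1 : m = r
      · subst h1
        rw [if_pos rfl, if_neg (show ¬ m + 1 = m by omega), if_pos rfl]
        ring
      · by_cases h2 : m + 1 = r
        · rw [if_neg h1, if_pos h2, if_neg (show ¬ m + 1 = r + 1 by omega), ← h2]
          push_cast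
          ring
        · rw [if_neg h1, if_neg h2, if_neg (show ¬ m + 1 = r + 1 by omega)]
          ring

/-- Poly-Bernoulli number of negative index `B_n^{(-k)}` (closed power-sum formula). -/
def polyB (n k : ℕ) : ℤ :=
  ∑ l ∈ Finset.Icc 1 k, (-1 : ℤ) ^ (l + k) * (Nat.factorial l) * S2 k l * ((l : ℤ) + 1) ^ n

/-- Rising factorial `(r)_l = r (r+1) ⋯ (r+l-1)`. -/
def risingFact (r l : ℕ) : ℕ := ∏ i ∈ Finset.range l, (r + i)

lemma key (r n : ℕ) (hr : 1 ≤ r) :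
    ∑ k ∈ Finset.Icc 1 r, (S1 r k : ℤ) * polyB n k
      = (Nat.factorial r : ℤ) * ((r : ℤ) + 1) ^ n := by
  have step1 : ∑ k ∈ Finset.Icc 1 r, (S1 r k : ℤ) * polyB n k
      = ∑ k ∈ Finset.Icc 1 r, ∑ l ∈ Finset.Icc 1 r,
          (S1 r k : ℤ) * ((-1 : ℤ) ^ (l + k) * (Nat.factorial l) * S2 k l * ((l : ℤ) + 1) ^ n) := by
    apply Finset.sum_congr rfl
    intro k hk
    rw [Finset.mem_Icc] at hk
    unfold polyB
    rw [Finset.mul_sum]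
    apply Finset.sum_subset (Finset.Icc_subset_Icc_right hk.2)
    intro l hl hnl
    rw [Finset.mem_Icc] at hl hnl
    rw [S2_zero_of_lt k l (by omega)]
    push_cast; ring
  rw [step1, Finset.sum_comm]
  have step2 : ∀ l ∈ Finset.Icc 1 r,
      (∑ k ∈ Finset.Icc 1 r, (S1 r k : ℤ) *
        ((-1 : ℤ) ^ (l + k) * (Nat.factorial l) * S2 k l * ((l : ℤ) + 1) ^ n))
      = ((-1:ℤ)^l * (Nat.factorial l) * ((l:ℤ)+1)^n) *
          ∑ k ∈ Finset.range (r+1), (-1 : ℤ) ^ k * S1 r k * S2 k l := by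
    intro l _
    rw [Finset.mul_sum]
    have hsub : Finset.Icc 1 r ⊆ Finset.range (r+1) := by
      intro x hx; rw [Finset.mem_Icc] at hx; rw [Finset.mem_range]; omega
    rw [← Finset.sum_subset hsub (by
      intro x hx hnx
      rw [Finset.mem_range] at hx
      rw [Finset.mem_Icc] at hnx
      have hx0 : x = 0 := by omega
      subst hx0
      rcases Nat.exists_eq_add_of_le hr with ⟨m, hm⟩
      subst hm
      rw [show S1 (1+m) 0 = 0 by rw [Nat.add_comm]; rfl]
      push_cast; ring)]
    apply Finset.sum_congr rfl
    intro k _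
    rw [pow_add]
    ring
  rw [Finset.sum_congr rfl step2]
  have step3 : ∀ l ∈ Finset.Icc 1 r,
      ((-1:ℤ)^l * (Nat.factorial l) * ((l:ℤ)+1)^n) *
          ∑ k ∈ Finset.range (r+1), (-1 : ℤ) ^ k * S1 r k * S2 k l
      = ((-1:ℤ)^l * (Nat.factorial l) * ((l:ℤ)+1)^n) *
          ((-1:ℤ)^r * (if l = r then 1 else 0)) := by
    intro l _
    rw [orth r l]
  rw [Finset.sum_congr rfl step3]
  rw [Finset.sum_eq_single_of_mem r (Finset.mem_Icc.mpr ⟨hr, le_refl r⟩)]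
  · rw [if_pos rfl]
    have hsq : (-1:ℤ)^r * (-1)^r = 1 := by
      rw [← pow_add, ← two_mul, pow_mul]; norm_num
    linear_combination ((Nat.factorial r : ℤ) * ((r:ℤ)+1)^n) * hsq
  · intro l _ hlr
    rw [if_neg hlr]
    ring

theorem stmt_8 (r n : ℕ) (hr : 1 ≤ r) :
    (1 / (Nat.factorial (r - 1) : ℚ)) *
        ∑ k ∈ Finset.Icc 1 r, (S1 r k : ℚ) * (polyB n k : ℚ) =
      (r : ℚ) * ((r : ℚ) + 1) ^ n := by
  have h := key r n hr
  have h2 : (∑ k ∈ Finset.Icc 1 r, (S1 r k : ℚ) * (polyB n k : ℚ))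
      = (Nat.factorial r : ℚ) * ((r : ℚ) + 1) ^ n := by
    have hc := congrArg (fun z : ℤ => (z : ℚ)) h
    push_cast at hc
    exact hc
  rw [h2]
  have hf : (Nat.factorial r : ℚ) = (r : ℚ) * (Nat.factorial (r-1) : ℚ) := by
    rw_mod_cast [Nat.mul_factorial_pred (by omega : r ≠ 0)]
  rw [hf]
  have hne : (Nat.factorial (r-1) : ℚ) ≠ 0 := Nat.cast_ne_zero.mpr (Nat.factorial_ne_zero _)
  field_simp
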